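/- arXiv:2307.13203 — 3 statements merged into one kernel-verified Lean document; each statement's English description precedes it below -/
import Mathlib

section
/- Let G = (V, E, src, tgt, v0, S, 𝕐, λ) be a world graph, M ⊆ S a sensor selection, I = (Q, E, δ, q0, F) an itinerary DFA over G, and S_{G,I,M} their signature automaton. Then the language of the signature automaton is exactly the set of signatures of walks conforming to the itinerary: L(S_{G,I,M}) = { β_G(w, M) : w ∈ Walks(G) ∩ L(I) }. -/
attribute [local instance] Classical.propDecidable

/-- A world graph: an edge-labelled directed multigraph with an initial vertex,
a nonempty finite set of sensors, pairwise disjoint event sets for the sensors,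
and a labelling of edges by sets of events drawn from the sensors' event sets. -/
structure WorldGraph (V E S Ev : Type) where
  src : E → V
  tgt : E → V
  v0 : V
  sensors : Finset S
  sensors_nonempty : sensors.Nonempty
  events : S → Set Ev
  events_disjoint : ∀ s ∈ sensors, ∀ t ∈ sensors, s ≠ t → Disjoint (events s) (events t)
  lab : E → Set Ev
  lab_sub : ∀ e, lab e ⊆ ⋃ s ∈ sensors, events s

namespace WorldGraph

variable {V E S Ev Q : Type}

/-- A walk: a string of edges starting at the initial vertex with matching endpoints. -/
def IsWalk (G : WorldGraph V E S Ev) (w : List E) : Prop :=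
  (∀ e ∈ w.head?, G.src e = G.v0) ∧ w.Chain' fun a b => G.tgt a = G.src b

/-- The set of all events producible by sensors in the selection `M`. -/
def YM (G : WorldGraph V E S Ev) (M : Finset S) : Set Ev := ⋃ s ∈ M, G.events s

/-- The sensor labelling function: `some (λ(e) ∩ Y_M)` if that set is nonempty, else
`none` (representing the empty symbol ε). -/
noncomputable def labM (G : WorldGraph V E S Ev) (M : Finset S) (e : E) : Option (Set Ev) :=
  if (G.lab e ∩ G.YM M).Nonempty then some (G.lab e ∩ G.YM M) else none

/-- The signature of a walk: the string of nonempty sensor labels, ε symbols dropped. -/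
noncomputable def signature (G : WorldGraph V E S Ev) (M : Finset S) (w : List E) :
    List (Set Ev) :=
  w.filterMap (G.labM M)

/-- One step of the (partial) product automaton of world graph `G` and itinerary DFA `I`. -/
noncomputable def prodStep (G : WorldGraph V E S Ev) (I : DFA E Q) (p : Q × V) (e : E) :
    Option (Q × V) :=
  if G.src e = p.2 then some (I.step p.1 e, G.tgt e) else none

/-- Tracing a string of edges through the product automaton from the initial state;
`none` means some transition was undefined (⊥). -/
noncomputable def prodEval (G : WorldGraph V E S Ev) (I : DFA E Q) (w : List E) :
    Option (Q × V) :=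
  w.foldl (fun o e => o.bind fun p => G.prodStep I p e) (some (I.start, G.v0))

/-- The language of the product automaton: strings traceable from `(q0, v0)` without
producing ⊥ which arrive at an accepting state. -/
def ProdAccepts (G : WorldGraph V E S Ev) (I : DFA E Q) (w : List E) : Prop :=
  ∃ p, G.prodEval I w = some p ∧ p.1 ∈ I.accept

/-- The signature automaton: an ε-NFA over the alphabet of sensor labels, with the
states, initial state, and accepting states of the product automaton. -/
noncomputable def sigNFA (G : WorldGraph V E S Ev) (I : DFA E Q) (M : Finset S) :
    εNFA (Set Ev) (Q × V) where
  step := fun p σ => { p' | ∃ e, G.prodStep I p e = some p' ∧ G.labM M e = σ }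
  start := {(I.start, G.v0)}
  accept := { p | p.1 ∈ I.accept }

/-- `M` satisfies the discrimination constraint `[I¹, I²]^≁`. -/
def SatisfiesDiscrimination {Q₁ Q₂ : Type} (G : WorldGraph V E S Ev)
    (I₁ : DFA E Q₁) (I₂ : DFA E Q₂) (M : Finset S) : Prop :=
  ¬ ∃ w₁ w₂ : List E, (G.IsWalk w₁ ∧ w₁ ∈ I₁.accepts) ∧ (G.IsWalk w₂ ∧ w₂ ∈ I₂.accepts) ∧
      G.signature M w₁ = G.signature M w₂

/-- `M` satisfies the conflation constraint `(I¹, I²)^~`. -/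
def SatisfiesConflation {Q₁ Q₂ : Type} (G : WorldGraph V E S Ev)
    (I₁ : DFA E Q₁) (I₂ : DFA E Q₂) (M : Finset S) : Prop :=
  ∀ w : List E, G.IsWalk w → w ∈ I₁.accepts →
    ∃ c : List E, G.IsWalk c ∧ c ∈ I₂.accepts ∧ G.signature M w = G.signature M c

end WorldGraph


namespace WorldGraph

variable {V E S Ev Q : Type}

/-- The end vertex of a walk. -/
noncomputable def endV (G : WorldGraph V E S Ev) (w : List E) : V :=
  (w.getLast?).elim G.v0 G.tgt

theorem endV_nil (G : WorldGraph V E S Ev) : G.endV ([] : List E) = G.v0 := rfl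

theorem endV_append (G : WorldGraph V E S Ev) (w : List E) (e : E) :
    G.endV (w ++ [e]) = G.tgt e := by simp [endV]

theorem isWalk_nil (G : WorldGraph V E S Ev) : G.IsWalk [] := by
  constructor <;> simp [List.Chain']

theorem isWalk_append_singleton (G : WorldGraph V E S Ev) (w : List E) (e : E) :
    G.IsWalk (w ++ [e]) ↔ G.IsWalk w ∧ G.src e = G.endV w := by
  unfold IsWalk endV List.Chain'
  rw [List.isChain_append]
  cases w with
  | nil => simp [eq_comm]
  | cons a t =>
    obtain ⟨l, hl⟩ : ∃ l, (a :: t).getLast? = some l :=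
      ⟨(a :: t).getLast (by simp), List.getLast?_eq_getLast (by simp)⟩
    rw [hl]
    simp [hl, eq_comm, and_assoc]

theorem prodEval_nil (G : WorldGraph V E S Ev) (I : DFA E Q) :
    G.prodEval I [] = some (I.start, G.v0) := rfl

theorem prodEval_append_singleton (G : WorldGraph V E S Ev) (I : DFA E Q) (w : List E) (e : E) :
    G.prodEval I (w ++ [e]) = (G.prodEval I w).bind (fun p => G.prodStep I p e) := by
  unfold prodEval
  rw [List.foldl_append, List.foldl_cons, List.foldl_nil]

theorem prodEval_eq_some_iff (G : WorldGraph V E S Ev) (I : DFA E Q) (w : List E) (p : Q × V) :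
    G.prodEval I w = some p ↔ G.IsWalk w ∧ p = (I.eval w, G.endV w) := by
  induction w using List.reverseRecOn generalizing p with
  | nil =>
    simp [prodEval_nil, isWalk_nil, endV_nil, DFA.eval_nil, eq_comm]
  | append_singleton w e ih =>
    rw [prodEval_append_singleton, isWalk_append_singleton]
    cases h : G.prodEval I w with
    | none =>
      simp only [Option.bind_none]
      constructor
      · intro hc; exact absurd hc (by simp)
      · rintro ⟨⟨hw, hs⟩, rfl⟩
        have := (ih (I.eval w, G.endV w)).mpr ⟨hw, rfl⟩
        rw [h] at this; exact absurd this (by simp)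
    | some q =>
      obtain ⟨hw, rfl⟩ := (ih q).mp h
      simp only [Option.bind_some, prodStep]
      split
      · next hsrc =>
        simp only [Option.some_inj]
        rw [DFA.eval_append_singleton, endV_append]
        constructor
        · intro hp; exact ⟨⟨hw, hsrc⟩, hp.symm⟩
        · rintro ⟨_, rfl⟩; rfl
      · next hsrc =>
        constructor
        · intro hc; exact absurd hc (by simp)
        · rintro ⟨⟨_, hs⟩, _⟩; exact absurd hs hsrc

theorem signature_append_singleton (G : WorldGraph V E S Ev) (M : Finset S) (w : List E) (e : E) :
    G.signature M (w ++ [e]) = G.signature M w ++ (G.labM M e).toList := by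
  simp only [signature, List.filterMap_append]
  cases h : G.labM M e <;> simp [h, List.filterMap]

/-- ε-closedness of the eval set of an εNFA. -/
theorem _root_.εNFA.eval_eps_closed {α σ : Type*} (N : εNFA α σ) (x : List α) {p q : σ}
    (hp : p ∈ N.eval x) (hq : q ∈ N.step p none) : q ∈ N.eval x := by
  induction x using List.reverseRecOn with
  | nil => exact εNFA.εClosure.step _ _ hq hp
  | append_singleton x a _ =>
    rw [εNFA.eval_append_singleton] at hp ⊢
    rw [εNFA.mem_stepSet_iff] at hp ⊢
    obtain ⟨t, ht, hpt⟩ := hp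
    exact ⟨t, ht, εNFA.εClosure.step _ _ hq hpt⟩

theorem mem_sigNFA_eval_iff (G : WorldGraph V E S Ev) (I : DFA E Q) (M : Finset S)
    (x : List (Set Ev)) (p : Q × V) :
    p ∈ (G.sigNFA I M).eval x ↔
      ∃ w : List E, G.prodEval I w = some p ∧ G.signature M w = x := by
  constructor
  · intro hp
    induction x using List.reverseRecOn generalizing p with
    | nil =>
      rw [εNFA.eval_nil] at hp
      induction hp with
      | base s hs =>
        obtain rfl : s = (I.start, G.v0) := hs
        exact ⟨[], prodEval_nil G I, rfl⟩
      | step s t ht _ ih =>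
        obtain ⟨w, hw, hsig⟩ := ih
        obtain ⟨e, he, hlab⟩ := ht
        refine ⟨w ++ [e], ?_, ?_⟩
        · rw [prodEval_append_singleton, hw, Option.bind_some, he]
        · rw [signature_append_singleton, hlab, hsig]; simp
    | append_singleton x σ ih =>
      rw [εNFA.eval_append_singleton, εNFA.mem_stepSet_iff] at hp
      obtain ⟨t, ht, hpt⟩ := hp
      obtain ⟨w, hw, hsig⟩ := ih t ht
      clear ht
      induction hpt with
      | base s hs =>
        obtain ⟨e, he, hlab⟩ := hs
        refine ⟨w ++ [e], ?_, ?_⟩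
        · rw [prodEval_append_singleton, hw, Option.bind_some, he]
        · rw [signature_append_singleton, hlab, hsig]; simp
      | step s t2 ht2 _ ih2 =>
        obtain ⟨w', hw', hsig'⟩ := ih2
        obtain ⟨e, he, hlab⟩ := ht2
        refine ⟨w' ++ [e], ?_, ?_⟩
        · rw [prodEval_append_singleton, hw', Option.bind_some, he]
        · rw [signature_append_singleton, hlab, hsig']; simp
  · rintro ⟨w, hw, rfl⟩
    induction w using List.reverseRecOn generalizing p with
    | nil =>
      rw [prodEval_nil, Option.some_inj] at hw
      subst hw
      exact εNFA.εClosure.base _ rfl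
    | append_singleton w e ih =>
      rw [prodEval_append_singleton] at hw
      cases h : G.prodEval I w with
      | none => rw [h] at hw; simp at hw
      | some q =>
        rw [h, Option.bind_some] at hw
        have hq := ih q h
        rw [signature_append_singleton]
        cases hlab : G.labM M e with
        | none =>
          simp only [hlab, Option.toList_none, List.append_nil]
          exact εNFA.eval_eps_closed _ _ hq ⟨e, hw, hlab⟩
        | some σ =>
          simp only [hlab, Option.toList_some]
          rw [εNFA.eval_append_singleton, εNFA.mem_stepSet_iff]
          exact ⟨q, hq, εNFA.εClosure.base _ ⟨e, hw, hlab⟩⟩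

end WorldGraph

/-- The language of the signature automaton is exactly the set of
signatures of walks conforming to the itinerary. -/
theorem sigNFA_accepts_eq_signatures
    (V E S Ev Q : Type) (G : WorldGraph V E S Ev) (I : DFA E Q)
    (M : Finset S) (hM : M ⊆ G.sensors) :
    (G.sigNFA I M).accepts =
      { x : List (Set Ev) | ∃ w : List E, G.IsWalk w ∧ w ∈ I.accepts ∧ G.signature M w = x } := by
  ext x
  simp only [εNFA.accepts, Set.mem_setOf_eq]
  constructor
  · rintro ⟨p, hacc, hp⟩
    obtain ⟨w, hw, hsig⟩ := (G.mem_sigNFA_eval_iff I M x p).mp hp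
    obtain ⟨hwalk, rfl⟩ := (G.prodEval_eq_some_iff I w p).mp hw
    exact ⟨w, hwalk, (DFA.mem_accepts I).mpr hacc, hsig⟩
  · rintro ⟨w, hwalk, hacc, rfl⟩
    refine ⟨(I.eval w, G.endV w), (DFA.mem_accepts I).mp hacc, ?_⟩
    exact (G.mem_sigNFA_eval_iff I M _ _).mpr
      ⟨w, (G.prodEval_eq_some_iff I w _).mpr ⟨hwalk, rfl⟩, rfl⟩
end

section
/- Let G = (V, E, src, tgt, v0, S, 𝕐, λ) be a world graph and I¹, I² itinerary DFAs over G. A sensor selection M ⊆ S satisfies the discrimination constraint [I¹, I²]^≁ (i.e., there exist no w1 ∈ Walks(G) ∩ L(I¹) and w2 ∈ Walks(G) ∩ L(I²) with β_G(w1, M) = β_G(w2, M)) if and only if the languages of the corresponding signature automata are disjoint: L(S_{G,I¹,M}) ∩ L(S_{G,I²,M}) = ∅. -/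
attribute [local instance] Classical.propDecidable

section Aux

open WorldGraph

variable {V E S Ev Q : Type} (G : WorldGraph V E S Ev) (I : DFA E Q)

/-- Evaluation of the product automaton from an arbitrary state. -/
noncomputable def prodEvalFrom (p : Q × V) (w : List E) : Option (Q × V) :=
  w.foldl (fun o e => o.bind fun q => G.prodStep I q e) (some p)

lemma prodEvalFrom_none (w : List E) :
    w.foldl (fun o e => o.bind fun q => G.prodStep I q e) none = none := by
  induction w with
  | nil => rfl
  | cons e w ih => simpa using ih

lemma prodEvalFrom_cons (p : Q × V) (e : E) (w : List E) :
    prodEvalFrom G I p (e :: w) =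
      (G.prodStep I p e).bind (fun q => prodEvalFrom G I q w) := by
  cases h : G.prodStep I p e with
  | none => simp [prodEvalFrom, h, prodEvalFrom_none]
  | some q => simp [prodEvalFrom, h]

lemma prodEval_eq (w : List E) : G.prodEval I w = prodEvalFrom G I (I.start, G.v0) w := rfl

lemma fst_of_prodEvalFrom {p p' : Q × V} {w : List E}
    (h : prodEvalFrom G I p w = some p') : p'.1 = w.foldl I.step p.1 := by
  induction w generalizing p with
  | nil => simp [prodEvalFrom] at h; simp [← h]
  | cons e w ih =>
      rw [prodEvalFrom_cons] at h
      cases hs : G.prodStep I p e with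
      | none => simp [hs] at h
      | some q =>
          rw [hs, Option.bind_some] at h
          have := ih h
          unfold WorldGraph.prodStep at hs
          split at hs
          · rw [List.foldl_cons, this, ← Option.some_inj.mp hs]
          · simp at hs

lemma walk_of_prodEvalFrom {p p' : Q × V} {w : List E}
    (h : prodEvalFrom G I p w = some p') :
    (∀ e ∈ w.head?, G.src e = p.2) ∧ w.Chain' (fun a b => G.tgt a = G.src b) := by
  induction w generalizing p with
  | nil => exact ⟨by simp, List.IsChain.nil⟩
  | cons e w ih =>
      rw [prodEvalFrom_cons] at h
      cases hs : G.prodStep I p e with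
      | none => simp [hs] at h
      | some q =>
          rw [hs, Option.bind_some] at h
          obtain ⟨h1, h2⟩ := ih h
          unfold WorldGraph.prodStep at hs
          split at hs
          · next hsrc =>
              refine ⟨by simpa using hsrc, List.isChain_cons.2 ⟨?_, h2⟩⟩
              intro e' he'
              have h3 := h1 e' he'
              have hq2 : q.2 = G.tgt e := by rw [← Option.some_inj.mp hs]
              rw [h3, hq2]
          · simp at hs

lemma prodEvalFrom_isSome {p : Q × V} {w : List E}
    (h1 : ∀ e ∈ w.head?, G.src e = p.2)
    (h2 : w.Chain' (fun a b => G.tgt a = G.src b)) :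
    ∃ p', prodEvalFrom G I p w = some p' := by
  induction w generalizing p with
  | nil => exact ⟨p, rfl⟩
  | cons e w ih =>
      have hsrc : G.src e = p.2 := h1 e rfl
      rw [prodEvalFrom_cons]
      have hs : G.prodStep I p e = some (I.step p.1 e, G.tgt e) := by
        simp [WorldGraph.prodStep, hsrc]
      rw [hs, Option.bind_some]
      refine ih ?_ h2.tail
      intro e' he'
      rcases w with _ | ⟨f, w⟩
      · simp at he'
      · simp at he'
        subst he'
        exact (List.isChain_cons_cons.1 h2).1.symm

/-- `ProdAccepts` iff walk and accepted by the DFA. -/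
lemma prodAccepts_iff (w : List E) :
    G.ProdAccepts I w ↔ G.IsWalk w ∧ w ∈ I.accepts := by
  constructor
  · rintro ⟨p, hp, hacc⟩
    rw [prodEval_eq] at hp
    refine ⟨walk_of_prodEvalFrom G I hp, ?_⟩
    rw [DFA.mem_accepts]
    have := fst_of_prodEvalFrom G I hp
    rwa [this] at hacc
  · rintro ⟨⟨h1, h2⟩, hacc⟩
    obtain ⟨p', hp'⟩ := prodEvalFrom_isSome G I (p := (I.start, G.v0)) h1 h2
    refine ⟨p', hp', ?_⟩
    rw [fst_of_prodEvalFrom G I hp']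
    exact hacc

/-- The eval sets of the signature NFA are closed under ε-transitions. -/
lemma sigNFA_eval_eps_closed (M : Finset S) (σs : List (Set Ev)) {s t : Q × V}
    (hs : s ∈ (G.sigNFA I M).eval σs) (ht : t ∈ (G.sigNFA I M).step s none) :
    t ∈ (G.sigNFA I M).eval σs := by
  induction σs using List.reverseRecOn with
  | nil =>
      rw [εNFA.eval_nil] at hs ⊢
      exact εNFA.εClosure.step s t ht hs
  | append_singleton σs σ _ =>
      rw [εNFA.eval_append_singleton, εNFA.mem_stepSet_iff] at hs ⊢
      obtain ⟨u, hu, hsu⟩ := hs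
      exact ⟨u, hu, εNFA.εClosure.step s t ht hsu⟩

/-- Completeness: every trace of the product automaton is tracked by the signature NFA. -/
lemma mem_eval_of_prodEval (M : Finset S) {w : List E} {p : Q × V}
    (h : G.prodEval I w = some p) :
    p ∈ (G.sigNFA I M).eval (G.signature M w) := by
  induction w using List.reverseRecOn generalizing p with
  | nil =>
      simp [WorldGraph.prodEval] at h
      subst h
      exact εNFA.εClosure.base _ rfl
  | append_singleton w e ih =>
      rw [prodEval_eq, prodEvalFrom] at h
      rw [List.foldl_append, List.foldl_cons, List.foldl_nil] at h
      cases hw : prodEvalFrom G I (I.start, G.v0) w with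
      | none => rw [prodEvalFrom] at hw; rw [hw] at h; simp at h
      | some q =>
          rw [prodEvalFrom] at hw
          rw [hw, Option.bind_some] at h
          have hq := ih hw
          cases hl : G.labM M e with
          | none =>
              have hsig : G.signature M (w ++ [e]) = G.signature M w := by
                simp [WorldGraph.signature, hl]
              rw [hsig]
              exact sigNFA_eval_eps_closed G I M _ hq ⟨e, h, hl⟩
          | some σ =>
              have hsig : G.signature M (w ++ [e]) = G.signature M w ++ [σ] := by
                simp [WorldGraph.signature, hl]
              rw [hsig, εNFA.eval_append_singleton, εNFA.mem_stepSet_iff]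
              exact ⟨q, hq, εNFA.εClosure.base _ ⟨e, h, hl⟩⟩

/-- Soundness for ε-closure. -/
lemma exists_of_mem_εClosure (M : Finset S) {T : Set (Q × V)} {p' : Q × V}
    (h : p' ∈ (G.sigNFA I M).εClosure T) :
    ∃ p ∈ T, ∃ w, prodEvalFrom G I p w = some p' ∧ G.signature M w = [] := by
  induction h with
  | base s hs => exact ⟨s, hs, [], rfl, rfl⟩
  | step s t hst _ ih =>
      obtain ⟨p, hp, w, hw, hsig⟩ := ih
      obtain ⟨e, he, hle⟩ := hst
      refine ⟨p, hp, w ++ [e], ?_, ?_⟩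
      · rw [prodEvalFrom, List.foldl_append, List.foldl_cons, List.foldl_nil]
        rw [prodEvalFrom] at hw
        rw [hw, Option.bind_some, he]
      · simp [WorldGraph.signature, hle] at hsig ⊢
        exact hsig

lemma prodEvalFrom_append (p : Q × V) (w₁ w₂ : List E) :
    prodEvalFrom G I p (w₁ ++ w₂) =
      (prodEvalFrom G I p w₁).bind (fun q => prodEvalFrom G I q w₂) := by
  cases h : prodEvalFrom G I p w₁ with
  | none =>
      rw [prodEvalFrom, List.foldl_append]
      rw [prodEvalFrom] at h
      rw [h, Option.bind_none, prodEvalFrom_none]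
  | some q =>
      rw [prodEvalFrom, List.foldl_append]
      rw [prodEvalFrom] at h
      rw [h, Option.bind_some]
      rfl

/-- Soundness: every state tracked by the signature NFA comes from a trace. -/
lemma exists_of_mem_eval (M : Finset S) (σs : List (Set Ev)) {p' : Q × V}
    (h : p' ∈ (G.sigNFA I M).eval σs) :
    ∃ w, G.prodEval I w = some p' ∧ G.signature M w = σs := by
  induction σs using List.reverseRecOn generalizing p' with
  | nil =>
      rw [εNFA.eval_nil] at h
      obtain ⟨p, hp, w, hw, hsig⟩ := exists_of_mem_εClosure G I M h
      have hp' : p = (I.start, G.v0) := hp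
      subst hp'
      exact ⟨w, hw, hsig⟩
  | append_singleton σs σ ih =>
      rw [εNFA.eval_append_singleton, εNFA.mem_stepSet_iff] at h
      obtain ⟨q, hq, hcl⟩ := h
      obtain ⟨w, hw, hsig⟩ := ih hq
      obtain ⟨r, hr, u, hu, husig⟩ := exists_of_mem_εClosure G I M hcl
      obtain ⟨e, he, hle⟩ := hr
      refine ⟨w ++ e :: u, ?_, ?_⟩
      · rw [prodEval_eq, prodEvalFrom_append, ← prodEval_eq, hw, Option.bind_some,
          prodEvalFrom_cons, he, Option.bind_some]
        exact hu
      · simp only [WorldGraph.signature] at hsig husig ⊢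
        simp [List.filterMap_append, List.filterMap_cons, hle, hsig, husig]

/-- The language of the signature NFA is exactly the set of signatures of accepted walks. -/
lemma mem_sigNFA_accepts_iff (M : Finset S) (x : List (Set Ev)) :
    x ∈ (G.sigNFA I M).accepts ↔
      ∃ w, G.IsWalk w ∧ w ∈ I.accepts ∧ G.signature M w = x := by
  constructor
  · rintro ⟨p, hp, hev⟩
    obtain ⟨w, hw, hsig⟩ := exists_of_mem_eval G I M x hev
    have := (prodAccepts_iff G I w).1 ⟨p, hw, hp⟩
    exact ⟨w, this.1, this.2, hsig⟩
  · rintro ⟨w, hwalk, hacc, hsig⟩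
    obtain ⟨p, hp, hpa⟩ := (prodAccepts_iff G I w).2 ⟨hwalk, hacc⟩
    exact ⟨p, hpa, hsig ▸ mem_eval_of_prodEval G I M hp⟩

end Aux

/-- `M` satisfies the discrimination constraint `[I¹, I²]^≁` iff the
languages of the corresponding signature automata are disjoint. -/
theorem satisfiesDiscrimination_iff_sig_languages_disjoint
    (V E S Ev Q₁ Q₂ : Type) (G : WorldGraph V E S Ev)
    (I₁ : DFA E Q₁) (I₂ : DFA E Q₂) (M : Finset S) (hM : M ⊆ G.sensors) :
    G.SatisfiesDiscrimination I₁ I₂ M ↔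
      (G.sigNFA I₁ M).accepts ⊓ (G.sigNFA I₂ M).accepts = ⊥ := by
  rw [WorldGraph.SatisfiesDiscrimination]
  constructor
  · intro h
    apply le_bot_iff.mp
    intro x hx
    obtain ⟨hx1, hx2⟩ := hx
    replace hx1 := (mem_sigNFA_accepts_iff G I₁ M x).1 hx1
    replace hx2 := (mem_sigNFA_accepts_iff G I₂ M x).1 hx2
    obtain ⟨w₁, hw₁, ha₁, hs₁⟩ := hx1
    obtain ⟨w₂, hw₂, ha₂, hs₂⟩ := hx2
    exact absurd ⟨w₁, w₂, ⟨hw₁, ha₁⟩, ⟨hw₂, ha₂⟩, hs₁.trans hs₂.symm⟩ h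
  · rintro h ⟨w₁, w₂, ⟨hw₁, ha₁⟩, ⟨hw₂, ha₂⟩, hsig⟩
    have h1 : G.signature M w₁ ∈ (G.sigNFA I₁ M).accepts :=
      (mem_sigNFA_accepts_iff G I₁ M _).2 ⟨w₁, hw₁, ha₁, rfl⟩
    have h2 : G.signature M w₁ ∈ (G.sigNFA I₂ M).accepts :=
      (mem_sigNFA_accepts_iff G I₂ M _).2 ⟨w₂, hw₂, ha₂, hsig.symm⟩
    have : G.signature M w₁ ∈ (G.sigNFA I₁ M).accepts ⊓ (G.sigNFA I₂ M).accepts := ⟨h1, h2⟩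
    rw [h] at this
    exact this
end

section
/- Let G = (V, E, src, tgt, v0, S, 𝕐, λ) be a world graph and I¹, I² itinerary DFAs over G. A sensor selection M ⊆ S satisfies the conflation constraint (I¹, I²)^~ (i.e., for every w ∈ Walks(G) ∩ L(I¹) there exists c_w ∈ Walks(G) ∩ L(I²) with β_G(w, M) = β_G(c_w, M)) if and only if the language of the first signature automaton is contained in that of the second: L(S_{G,I¹,M}) ⊆ L(S_{G,I²,M}). -/
attribute [local instance] Classical.propDecidable

namespace WorldGraphAux

open WorldGraph

variable {V E S Ev Q : Type} (G : WorldGraph V E S Ev) (I : DFA E Q) (M : Finset S)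

lemma prodEvalFrom_eq (w : List E) : ∀ (q : Q) (v : V) (p : Q × V),
    w.foldl (fun o e => o.bind fun p => G.prodStep I p e) (some (q, v)) = some p ↔
      ((∀ e ∈ w.head?, G.src e = v) ∧ (w.Chain' fun a b => G.tgt a = G.src b))
        ∧ p = (I.evalFrom q w, w.foldl (fun _ e => G.tgt e) v) := by
  induction w with
  | nil =>
    intro q v p
    simp [DFA.evalFrom, eq_comm]
    exact fun _ => List.isChain_nil
  | cons e w ih =>
    intro q v p
    by_cases h : G.src e = v
    · rw [List.foldl_cons,
        show ((some (q,v)).bind fun p => G.prodStep I p e) = some (I.step q e, G.tgt e) from by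
          simp [WorldGraph.prodStep, h]]
      rw [ih]
      constructor
      · rintro ⟨⟨h1, h2⟩, rfl⟩
        refine ⟨⟨?_, List.isChain_cons.2 ⟨fun b hb => (h1 b hb).symm, h2⟩⟩, rfl⟩
        intro e' he'
        simp only [List.head?_cons, Option.mem_def, Option.some.injEq] at he'
        subst he'; exact h
      · rintro ⟨⟨h1, h2⟩, rfl⟩
        rcases List.isChain_cons.1 h2 with ⟨h3, h4⟩
        exact ⟨⟨fun b hb => (h3 b hb).symm, h4⟩, rfl⟩
    · rw [List.foldl_cons,
        show ((some (q,v)).bind fun p => G.prodStep I p e) = (none : Option (Q × V)) from by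
          simp [WorldGraph.prodStep, h]]
      have hnone : ∀ (l : List E),
          l.foldl (fun o e => o.bind fun p => G.prodStep I p e) none = none := by
        intro l; induction l with
        | nil => rfl
        | cons a l ihl => simpa using ihl
      rw [hnone]
      exact iff_of_false (by simp) fun h' => h (h'.1.1 e rfl)

lemma prodEval_eq_some {w : List E} {p : Q × V} :
    G.prodEval I w = some p ↔ G.IsWalk w ∧
      p = (I.eval w, w.foldl (fun _ e => G.tgt e) G.v0) :=
  prodEvalFrom_eq G I w I.start G.v0 p

lemma prodEval_append_singleton (w : List E) (e : E) :
    G.prodEval I (w ++ [e]) = (G.prodEval I w).bind fun t => G.prodStep I t e := by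
  simp [WorldGraph.prodEval, List.foldl_append]

lemma eval_eps_closed {x : List (Set Ev)} {t p : Q × V}
    (ht : t ∈ (G.sigNFA I M).eval x) (hp : p ∈ (G.sigNFA I M).step t none) :
    p ∈ (G.sigNFA I M).eval x := by
  induction x using List.reverseRecOn with
  | nil => exact εNFA.εClosure.step t p hp ht
  | append_singleton y a _ =>
    rw [εNFA.eval_append_singleton] at ht ⊢
    rcases εNFA.mem_stepSet_iff.1 ht with ⟨s, hs, hts⟩
    exact εNFA.mem_stepSet_iff.2 ⟨s, hs, εNFA.εClosure.step t p hp hts⟩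

lemma mem_eval_of_prodEval {w : List E} {p : Q × V} (h : G.prodEval I w = some p) :
    p ∈ (G.sigNFA I M).eval (G.signature M w) := by
  induction w using List.reverseRecOn generalizing p with
  | nil =>
    simp only [WorldGraph.prodEval, List.foldl_nil, Option.some.injEq] at h
    subst h
    exact εNFA.εClosure.base _ rfl
  | append_singleton w e ih =>
    rw [prodEval_append_singleton] at h
    rcases Option.bind_eq_some_iff.1 h with ⟨t, ht, hstep⟩
    have hte := ih ht
    cases hl : G.labM M e with
    | none =>
      have hsig : G.signature M (w ++ [e]) = G.signature M w := by
        simp [WorldGraph.signature, hl]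
      rw [hsig]
      exact eval_eps_closed G I M hte ⟨e, hstep, hl⟩
    | some a =>
      have hsig : G.signature M (w ++ [e]) = G.signature M w ++ [a] := by
        simp [WorldGraph.signature, hl]
      rw [hsig, εNFA.eval_append_singleton]
      exact εNFA.mem_stepSet_iff.2 ⟨t, hte, εNFA.εClosure.base _ ⟨e, hstep, hl⟩⟩

lemma exists_walk_of_mem_eval {x : List (Set Ev)} {p : Q × V}
    (h : p ∈ (G.sigNFA I M).eval x) :
    ∃ w, G.prodEval I w = some p ∧ G.signature M w = x := by
  induction x using List.reverseRecOn generalizing p with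
  | nil =>
    induction h with
    | base s hs =>
      rcases hs with rfl
      exact ⟨[], rfl, rfl⟩
    | step s t hst _ ihs =>
      rcases ihs with ⟨w, hw, hsig⟩
      rcases hst with ⟨e, he, hl⟩
      refine ⟨w ++ [e], ?_, ?_⟩
      · rw [prodEval_append_singleton, hw]; exact he
      · simpa [WorldGraph.signature, hl] using hsig
  | append_singleton y a ih =>
    rw [εNFA.eval_append_singleton] at h
    rcases εNFA.mem_stepSet_iff.1 h with ⟨t, ht, hp⟩
    rcases ih ht with ⟨w, hw, hsig⟩
    clear ih h ht
    induction hp with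
    | base s hs =>
      rcases hs with ⟨e, he, hl⟩
      refine ⟨w ++ [e], ?_, ?_⟩
      · rw [prodEval_append_singleton, hw]; exact he
      · simpa [WorldGraph.signature, hl] using hsig
    | step s u hsu _ ihs =>
      rcases ihs with ⟨w', hw', hsig'⟩
      rcases hsu with ⟨e, he, hl⟩
      refine ⟨w' ++ [e], ?_, ?_⟩
      · rw [prodEval_append_singleton, hw']; exact he
      · simpa [WorldGraph.signature, hl] using hsig'

lemma mem_sig_accepts {x : List (Set Ev)} :
    x ∈ (G.sigNFA I M).accepts ↔
      ∃ w, G.IsWalk w ∧ w ∈ I.accepts ∧ G.signature M w = x := by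
  constructor
  · rintro ⟨p, hacc, hev⟩
    rcases exists_walk_of_mem_eval G I M hev with ⟨w, hw, hsig⟩
    rcases (prodEval_eq_some G I).1 hw with ⟨hwalk, rfl⟩
    exact ⟨w, hwalk, (DFA.mem_accepts _).2 hacc, hsig⟩
  · rintro ⟨w, hwalk, hacc, rfl⟩
    have hev : G.prodEval I w =
        some (I.eval w, w.foldl (fun _ e => G.tgt e) G.v0) :=
      (prodEval_eq_some G I).2 ⟨hwalk, rfl⟩
    exact ⟨_, (DFA.mem_accepts _).1 hacc, mem_eval_of_prodEval G I M hev⟩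

end WorldGraphAux


/-- `M` satisfies the conflation constraint `(I¹, I²)^~` iff the language
of the first signature automaton is contained in that of the second. -/
theorem satisfiesConflation_iff_sig_language_subset
    (V E S Ev Q₁ Q₂ : Type) (G : WorldGraph V E S Ev)
    (I₁ : DFA E Q₁) (I₂ : DFA E Q₂) (M : Finset S) (hM : M ⊆ G.sensors) :
    G.SatisfiesConflation I₁ I₂ M ↔
      (G.sigNFA I₁ M).accepts ≤ (G.sigNFA I₂ M).accepts := by
  constructor
  · intro h x hx
    rcases (WorldGraphAux.mem_sig_accepts G I₁ M).1 hx with ⟨w, hwalk, hacc, hsig⟩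
    rcases h w hwalk hacc with ⟨c, hc1, hc2, hc3⟩
    exact (WorldGraphAux.mem_sig_accepts G I₂ M).2 ⟨c, hc1, hc2, hc3 ▸ hsig⟩
  · intro h w hwalk hacc
    have hx : G.signature M w ∈ (G.sigNFA I₁ M).accepts :=
      (WorldGraphAux.mem_sig_accepts G I₁ M).2 ⟨w, hwalk, hacc, rfl⟩
    rcases (WorldGraphAux.mem_sig_accepts G I₂ M).1 (h hx) with ⟨c, hc1, hc2, hsig⟩
    exact ⟨c, hc1, hc2, hsig.symm⟩
end
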